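/- arXiv:2011.11464 — 2 statements merged into one kernel-verified Lean document; each statement's English description precedes it below -/
import Mathlib

section
/- Let P, Q be symmetric positive definite n×n matrices and M an n×n matrix with PM + MᵀP = -Q. Then along any solution ξ of ξ' = M(ξ - c), the function t ↦ (ξ(t) - c)ᵀP(ξ(t) - c) is strictly decreasing whenever ξ(t) ≠ c, and moreover for any r > 0 there exists ε > 0 such that the derivative is less than -ε whenever |ξ(t) - c| ≥ r. -/
open Matrix

-- derivative of quadratic form along a curve
lemma quad_hasDerivAt {n : ℕ} (P : Matrix (Fin n) (Fin n) ℝ) (x : ℝ → Fin n → ℝ)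
    (x' : Fin n → ℝ) (t : ℝ) (hx : ∀ i, HasDerivAt (fun τ => x τ i) (x' i) t) :
    HasDerivAt (fun τ => x τ ⬝ᵥ P.mulVec (x τ))
      (x' ⬝ᵥ P.mulVec (x t) + x t ⬝ᵥ P.mulVec x') t := by
  have h : HasDerivAt (fun τ => ∑ i, x τ i * ∑ j, P i j * x τ j)
      (∑ i, (x' i * ∑ j, P i j * x t j + x t i * ∑ j, P i j * x' j)) t := by
    apply HasDerivAt.fun_sum
    intro i _
    exact (hx i).mul (HasDerivAt.fun_sum fun j _ => (hx j).const_mul (P i j))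
  convert h using 1
  simp [dotProduct, mulVec, Finset.sum_add_distrib]
  simp only [dotProduct, mulVec, ← Finset.sum_add_distrib]

-- uniform positivity of posdef quadratic form
lemma posdef_lower {n : ℕ} (Q : Matrix (Fin n) (Fin n) ℝ) (hQ : Q.PosDef) :
    ∃ m > (0:ℝ), ∀ x : EuclideanSpace ℝ (Fin n), m * ‖x‖^2 ≤ x ⬝ᵥ Q.mulVec x := by
  have hcont : Continuous fun x : EuclideanSpace ℝ (Fin n) => x ⬝ᵥ Q.mulVec x := by
    unfold dotProduct mulVec
    exact continuous_finset_sum _ fun i _ =>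
      ((EuclideanSpace.proj i).continuous).mul
        (continuous_finset_sum _ fun j _ =>
          (continuous_const.mul ((EuclideanSpace.proj j).continuous)))
  rcases Nat.eq_zero_or_pos n with hn | hn
  · refine ⟨1, one_pos, fun x => ?_⟩
    subst hn
    have : x = 0 := Subsingleton.elim x 0
    simp [this, dotProduct]
  · have hne : (Metric.sphere (0 : EuclideanSpace ℝ (Fin n)) 1).Nonempty := by
      exact ⟨EuclideanSpace.single ⟨0, hn⟩ (1:ℝ), by simp⟩
    obtain ⟨u, hu, hmin⟩ := (isCompact_sphere (0 : EuclideanSpace ℝ (Fin n)) 1).exists_isMinOn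
      hne hcont.continuousOn
    have hupos : u ≠ 0 := by
      intro h
      have := mem_sphere_zero_iff_norm.1 hu
      simp [h] at this
    refine ⟨u ⬝ᵥ Q.mulVec u, (by simpa using hQ.dotProduct_mulVec_pos (x := (u : Fin n → ℝ)) (by simpa using hupos)), fun x => ?_⟩
    rcases eq_or_ne x 0 with rfl | hx
    · simp [dotProduct]
    · have hxn : ‖x‖ ≠ 0 := norm_ne_zero_iff.2 hx
      set y : EuclideanSpace ℝ (Fin n) := ‖x‖⁻¹ • x with hy
      have hymem : y ∈ Metric.sphere (0 : EuclideanSpace ℝ (Fin n)) 1 := by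
        simp [hy, norm_smul, abs_of_nonneg (inv_nonneg.2 (norm_nonneg x)),
          inv_mul_cancel₀ hxn]
      have hqy : (u ⬝ᵥ Q.mulVec u) ≤ y ⬝ᵥ Q.mulVec y := hmin hymem
      have hscale : (y : Fin n → ℝ) ⬝ᵥ Q.mulVec y = ‖x‖⁻¹^2 * (x ⬝ᵥ Q.mulVec x) := by
        have : (y : Fin n → ℝ) = ‖x‖⁻¹ • (x : Fin n → ℝ) := rfl
        rw [this, Matrix.mulVec_smul, smul_dotProduct, dotProduct_smul]
        ring_nf
      rw [hscale] at hqy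
      have h2 : (u ⬝ᵥ Q.mulVec u) * ‖x‖^2 ≤ ‖x‖⁻¹^2 * (x ⬝ᵥ Q.mulVec x) * ‖x‖^2 :=
        mul_le_mul_of_nonneg_right hqy (sq_nonneg _)
      calc (u ⬝ᵥ Q.mulVec u) * ‖x‖^2 ≤ ‖x‖⁻¹^2 * (x ⬝ᵥ Q.mulVec x) * ‖x‖^2 := h2
        _ = x ⬝ᵥ Q.mulVec x := by field_simp

theorem stmt_7 {n : ℕ} (P Q M : Matrix (Fin n) (Fin n) ℝ)
    (hP : P.PosDef) (hPsym : P.IsHermitian) (hQ : Q.PosDef) (hQsym : Q.IsHermitian)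
    (hLyap : P * M + Mᵀ * P = -Q)
    (c : EuclideanSpace ℝ (Fin n)) (ξ : ℝ → EuclideanSpace ℝ (Fin n))
    (hξ : ∀ t : ℝ, HasDerivAt ξ (WithLp.toLp 2 (M.mulVec (ξ t - c) : Fin n → ℝ) : EuclideanSpace ℝ (Fin n)) t) :
    (∀ t : ℝ, ξ t ≠ c →
        deriv (fun τ => ((ξ τ - c : Fin n → ℝ) ⬝ᵥ P.mulVec (ξ τ - c))) t < 0) ∧
      ∀ r > (0 : ℝ), ∃ ε > (0 : ℝ), ∀ t : ℝ, r ≤ ‖ξ t - c‖ →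
        deriv (fun τ => ((ξ τ - c : Fin n → ℝ) ⬝ᵥ P.mulVec (ξ τ - c))) t < -ε := by
  obtain ⟨m, hm, hmle⟩ := posdef_lower Q hQ
  have key : ∀ t : ℝ,
      deriv (fun τ => ((ξ τ - c : Fin n → ℝ) ⬝ᵥ P.mulVec (ξ τ - c))) t
        = -((ξ t - c : Fin n → ℝ) ⬝ᵥ Q.mulVec (ξ t - c)) := by
    intro t
    set x : Fin n → ℝ := (ξ t - c : Fin n → ℝ) with hx
    have hcoord : ∀ i, HasDerivAt (fun τ => (ξ τ - c : Fin n → ℝ) i) (M.mulVec x i) t := by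
      intro i
      have h1 : HasDerivAt (fun τ => (EuclideanSpace.proj i (𝕜 := ℝ)) (ξ τ))
          ((EuclideanSpace.proj i (𝕜 := ℝ)) (WithLp.toLp 2 (M.mulVec x : Fin n → ℝ) : EuclideanSpace ℝ (Fin n))) t :=
        (EuclideanSpace.proj i (𝕜 := ℝ)).hasFDerivAt.comp_hasDerivAt t (hξ t)
      exact h1.sub_const (c i)
    have hD := quad_hasDerivAt P (fun τ => (ξ τ - c : Fin n → ℝ)) (M.mulVec x) t hcoord
    rw [hD.deriv]
    have e1 : (M *ᵥ x) ⬝ᵥ (P *ᵥ x) = x ⬝ᵥ (Mᵀ * P) *ᵥ x := by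
      rw [← Matrix.mulVec_mulVec, Matrix.dotProduct_mulVec x Mᵀ, Matrix.vecMul_transpose]
    have e2 : x ⬝ᵥ P *ᵥ (M *ᵥ x) = x ⬝ᵥ (P * M) *ᵥ x := by
      rw [Matrix.mulVec_mulVec]
    show (M *ᵥ x) ⬝ᵥ (P *ᵥ x) + x ⬝ᵥ P *ᵥ (M *ᵥ x) = -(x ⬝ᵥ Q *ᵥ x)
    rw [e1, e2, ← dotProduct_add, ← Matrix.add_mulVec]
    rw [show Mᵀ * P + P * M = -Q by rw [add_comm]; exact hLyap]
    rw [Matrix.neg_mulVec, dotProduct_neg]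
  have hquad : ∀ t : ℝ, m * ‖ξ t - c‖ ^ 2 ≤ (ξ t - c : Fin n → ℝ) ⬝ᵥ Q.mulVec (ξ t - c) :=
    fun t => hmle (ξ t - c)
  constructor
  · intro t ht
    rw [key t]
    have hx0 : (0:ℝ) < ‖ξ t - c‖ := norm_pos_iff.2 (sub_ne_zero.2 ht)
    have : (0:ℝ) < m * ‖ξ t - c‖ ^ 2 := by positivity
    linarith [hquad t]
  · intro r hr
    refine ⟨m * r ^ 2 / 2, by positivity, fun t hrt => ?_⟩
    rw [key t]
    have h1 : m * r ^ 2 ≤ m * ‖ξ t - c‖ ^ 2 := by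
      apply mul_le_mul_of_nonneg_left _ hm.le
      have : (0:ℝ) ≤ r := hr.le
      nlinarith
    have h2 : (0:ℝ) < m * r ^ 2 := by positivity
    linarith [hquad t]
end

section
/- Let P, Q be symmetric positive definite n×n matrices with PM + MᵀP = -Q, and ξ a solution of ξ' = M(ξ - c) with initial condition ξ(0) = ξ₀. Then for every r > 0 there exists a finite time T ≥ 0 such that |ξ(T) - c| ≤ r. -/
open Matrix

private lemma aux_rayleigh_lower {n : ℕ} {A : Matrix (Fin n) (Fin n) ℝ} (hA : A.PosDef) :
    ∃ m : ℝ, 0 < m ∧ ∀ x : EuclideanSpace ℝ (Fin n),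
      m * ‖x‖ ^ 2 ≤ (inner ℝ x (Matrix.toEuclideanCLM (𝕜 := ℝ) A x) : ℝ) := by
  set T := Matrix.toEuclideanCLM (𝕜 := ℝ) A with hT
  have hpos : ∀ x : EuclideanSpace ℝ (Fin n), x ≠ 0 → 0 < (inner ℝ x (T x) : ℝ) := by
    intro x hx
    have h2 := hA.dotProduct_mulVec_pos (x := (x : Fin n → ℝ)) (by simpa using hx)
    rw [real_inner_comm]; exact h2
  rcases subsingleton_or_nontrivial (EuclideanSpace ℝ (Fin n)) with hs | hs
  · refine ⟨1, one_pos, fun x => ?_⟩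
    have hx0 : x = 0 := Subsingleton.elim _ _
    simp [hx0]
  · have hsn : (Metric.sphere (0 : EuclideanSpace ℝ (Fin n)) 1).Nonempty :=
      NormedSpace.sphere_nonempty.mpr zero_le_one
    have hcont : Continuous fun x : EuclideanSpace ℝ (Fin n) => (inner ℝ x (T x) : ℝ) :=
      continuous_id.inner T.continuous
    obtain ⟨z, hz, hmin⟩ := (isCompact_sphere (0 : EuclideanSpace ℝ (Fin n)) 1).exists_isMinOn
      hsn hcont.continuousOn
    have hz1 : ‖z‖ = 1 := by simpa using hz
    have hzne : z ≠ 0 := by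
      intro h; rw [h] at hz1; simp at hz1
    refine ⟨inner ℝ z (T z), hpos z hzne, fun x => ?_⟩
    rcases eq_or_ne x 0 with rfl | hx
    · simp
    · have hxn : (0 : ℝ) < ‖x‖ := norm_pos_iff.mpr hx
      set u : EuclideanSpace ℝ (Fin n) := ‖x‖⁻¹ • x with hu
      have hun : ‖u‖ = 1 := by
        rw [hu, norm_smul]
        simp [abs_of_pos (inv_pos.mpr hxn), inv_mul_cancel₀ hxn.ne']
      have hmem : u ∈ Metric.sphere (0 : EuclideanSpace ℝ (Fin n)) 1 := by
        simpa using hun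
      have hle := hmin hmem
      have huq : (inner ℝ u (T u) : ℝ) = ‖x‖⁻¹ ^ 2 * inner ℝ x (T x) := by
        rw [hu, T.map_smul, real_inner_smul_left, real_inner_smul_right]
        ring
      have : (inner ℝ z (T z) : ℝ) ≤ ‖x‖⁻¹ ^ 2 * inner ℝ x (T x) := by
        rw [← huq]; exact hle
      have hx2 : (0 : ℝ) < ‖x‖ ^ 2 := by positivity
      calc (inner ℝ z (T z) : ℝ) * ‖x‖ ^ 2 ≤ (‖x‖⁻¹ ^ 2 * inner ℝ x (T x)) * ‖x‖ ^ 2 := by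
            exact mul_le_mul_of_nonneg_right this hx2.le
        _ = inner ℝ x (T x) := by
            field_simp
theorem stmt_8 {n : ℕ} (P Q M : Matrix (Fin n) (Fin n) ℝ)
    (hP : P.PosDef) (hPsym : P.IsHermitian) (hQ : Q.PosDef) (hQsym : Q.IsHermitian)
    (hLyap : P * M + Mᵀ * P = -Q)
    (c ξ₀ : EuclideanSpace ℝ (Fin n)) (ξ : ℝ → EuclideanSpace ℝ (Fin n))
    (hξ0 : ξ 0 = ξ₀)
    (hξ : ∀ t : ℝ, HasDerivAt ξ (WithLp.toLp 2 (M.mulVec (ξ t - c) : Fin n → ℝ) : EuclideanSpace ℝ (Fin n)) t) :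
    ∀ r > (0 : ℝ), ∃ T : ℝ, 0 ≤ T ∧ ‖ξ T - c‖ ≤ r := by
  intro r hr
  set TP := Matrix.toEuclideanCLM (𝕜 := ℝ) P with hTP
  set TQ := Matrix.toEuclideanCLM (𝕜 := ℝ) Q with hTQ
  set TM := Matrix.toEuclideanCLM (𝕜 := ℝ) M with hTM
  set y : ℝ → EuclideanSpace ℝ (Fin n) := fun t => ξ t - c with hy_def
  have hy : ∀ t, HasDerivAt y (TM (y t)) t := fun t => (hξ t).sub_const c
  set V : ℝ → ℝ := fun t => (inner ℝ (y t) (TP (y t)) : ℝ) with hV_def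
  -- derivative of V
  have hVd : ∀ t, HasDerivAt V
      ((inner ℝ (y t) (TP (TM (y t))) : ℝ) + inner ℝ (TM (y t)) (TP (y t))) t := by
    intro t
    exact (hy t).inner ℝ (TP.hasFDerivAt.comp_hasDerivAt t (hy t))
  -- key algebraic identity
  have hkey : ∀ v : EuclideanSpace ℝ (Fin n),
      (inner ℝ v (TP (TM v)) : ℝ) + inner ℝ (TM v) (TP v) = -(inner ℝ v (TQ v) : ℝ) := by
    intro v
    rw [real_inner_comm (TP (TM v)) v, real_inner_comm (TP v) (TM v), real_inner_comm (TQ v) v]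
    show ((v : Fin n → ℝ) ⬝ᵥ P.mulVec (M.mulVec v)) + (M.mulVec (v : Fin n → ℝ)) ⬝ᵥ P.mulVec v
      = -((v : Fin n → ℝ) ⬝ᵥ Q.mulVec v)
    have h1 : (v : Fin n → ℝ) ⬝ᵥ P.mulVec (M.mulVec v) = v ⬝ᵥ (P * M).mulVec v := by
      rw [← Matrix.mulVec_mulVec]
    have h2 : (M.mulVec (v : Fin n → ℝ)) ⬝ᵥ P.mulVec v = v ⬝ᵥ (Mᵀ * P).mulVec v := by
      rw [← Matrix.mulVec_mulVec, Matrix.dotProduct_mulVec v Mᵀ,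
        Matrix.vecMul_transpose]
    rw [h1, h2, ← dotProduct_add, ← Matrix.add_mulVec, hLyap, Matrix.neg_mulVec,
      dotProduct_neg]
  obtain ⟨m, hm, hmle⟩ := aux_rayleigh_lower hP
  obtain ⟨β, hβ, hβle⟩ := aux_rayleigh_lower hQ
  set L : ℝ := ‖TP‖ + 1 with hL_def
  have hL : 0 < L := by have := norm_nonneg TP; simp only [hL_def]; linarith
  have hVub : ∀ v : EuclideanSpace ℝ (Fin n), (inner ℝ v (TP v) : ℝ) ≤ L * ‖v‖ ^ 2 := by
    intro v
    calc (inner ℝ v (TP v) : ℝ) ≤ ‖v‖ * ‖TP v‖ := real_inner_le_norm _ _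
      _ ≤ ‖v‖ * (‖TP‖ * ‖v‖) := by
          exact mul_le_mul_of_nonneg_left (TP.le_opNorm v) (norm_nonneg v)
      _ ≤ L * ‖v‖ ^ 2 := by
          have : ‖TP‖ ≤ L := by simp only [hL_def]; linarith
          nlinarith [norm_nonneg v, sq_nonneg ‖v‖]
  set α : ℝ := β / L with hα_def
  have hα : 0 < α := div_pos hβ hL
  have hαL : α * L = β := div_mul_cancel₀ β hL.ne'
  -- W is antitone
  set W : ℝ → ℝ := fun t => V t * Real.exp (α * t) with hW_def
  set W' : ℝ → ℝ := fun t => (-(inner ℝ (y t) (TQ (y t)) : ℝ) + α * V t) * Real.exp (α * t)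
    with hW'_def
  have hWd : ∀ t, HasDerivAt W (W' t) t := by
    intro t
    have he : HasDerivAt (fun s => Real.exp (α * s)) (Real.exp (α * t) * α) t := by
      exact (Real.hasDerivAt_exp (α * t)).comp t (by simpa using (hasDerivAt_id t).const_mul α)
    have := ((hVd t).congr_deriv (hkey (y t))).mul he
    refine HasDerivAt.congr_deriv this ?_
    simp [hW'_def, hV_def]
    ring
  have hW'le : ∀ t, W' t ≤ 0 := by
    intro t
    have h1 : β * ‖y t‖ ^ 2 ≤ (inner ℝ (y t) (TQ (y t)) : ℝ) := hβle (y t)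
    have h2 : V t ≤ L * ‖y t‖ ^ 2 := hVub (y t)
    have h3 : -(inner ℝ (y t) (TQ (y t)) : ℝ) + α * V t ≤ 0 := by
      have : α * V t ≤ α * (L * ‖y t‖ ^ 2) := mul_le_mul_of_nonneg_left h2 hα.le
      nlinarith [hαL]
    exact mul_nonpos_of_nonpos_of_nonneg h3 (Real.exp_pos _).le
  have hanti : Antitone W := antitone_of_hasDerivAt_nonpos hWd hW'le
  -- decay bound
  have hdecay : ∀ t : ℝ, 0 ≤ t → V t ≤ V 0 * Real.exp (-(α * t)) := by
    intro t ht
    have h := hanti ht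
    have hW0 : W 0 = V 0 := by simp [hW_def]
    have : V t * Real.exp (α * t) ≤ V 0 := by rw [← hW0]; exact h
    rw [Real.exp_neg, mul_comm (V 0), ← div_eq_inv_mul, le_div_iff₀ (Real.exp_pos _)]
    exact this
  -- find T
  have htend : Filter.Tendsto (fun t => V 0 * Real.exp (-(α * t))) Filter.atTop (nhds 0) := by
    have h1 : Filter.Tendsto (fun t : ℝ => α * t) Filter.atTop Filter.atTop :=
      Filter.Tendsto.const_mul_atTop hα Filter.tendsto_id
    have h2 := Real.tendsto_exp_neg_atTop_nhds_zero.comp h1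
    have := h2.const_mul (V 0)
    simpa using this
  have hev : ∀ᶠ t in Filter.atTop,
      V 0 * Real.exp (-(α * t)) ≤ m * r ^ 2 ∧ 0 ≤ t := by
    refine Filter.Eventually.and ?_ (Filter.eventually_ge_atTop 0)
    exact htend.eventually (eventually_le_nhds (by positivity))
  obtain ⟨T, hT1, hT2⟩ := hev.exists
  refine ⟨T, hT2, ?_⟩
  have hlow : m * ‖y T‖ ^ 2 ≤ V T := hmle (y T)
  have hchain : m * ‖y T‖ ^ 2 ≤ m * r ^ 2 := le_trans hlow (le_trans (hdecay T hT2) hT1)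
  have hsq : ‖y T‖ ^ 2 ≤ r ^ 2 := le_of_mul_le_mul_left (by linarith) hm
  have : ‖y T‖ ≤ r := by nlinarith [norm_nonneg (y T)]
  simpa [hy_def] using this
end
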